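/- Let n ≥ 2, let α ∈ (0,1/2)^n, and let (a_2,…,a_n, b_1,…,b_n) ∈ N^G(Σ;α). Set c_i = a_i b_i a_i⁻¹ for i = 2,…,n. Define the ℝ-linear map L : su(2)^{n−1} → su(2) by L(ξ_2,…,ξ_n) = Σ_{i=2}^{n} (c_2⋯c_{i−1}) (ξ_i − c_i ξ_i c_i⁻¹) (c_2⋯c_{i−1})⁻¹, where the empty product (for i = 2) is the identity matrix. Then L is surjective if and only if there is no u ∈ SU(2) such that u b_1 u⁻¹, u c_2 u⁻¹, …, u c_n u⁻¹ are all diagonal matrices. -/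

import Mathlib

noncomputable section

open Matrix Complex Real

/-- 2×2 complex matrices. -/
abbrev M2 : Type := Matrix (Fin 2) (Fin 2) ℂ

/-- The special unitary group SU(2), as a subgroup of the unitary group. -/
def SU2 : Subgroup (Matrix.unitaryGroup (Fin 2) ℂ) where
  carrier := { g | Matrix.det (g : M2) = 1 }
  one_mem' := by simp
  mul_mem' := by
    intro a b ha hb
    simp only [Set.mem_setOf_eq, Matrix.UnitaryGroup.mul_val, Matrix.det_mul] at *
    rw [ha, hb, mul_one]
  inv_mem' := by
    intro a ha
    simp only [Set.mem_setOf_eq, Matrix.UnitaryGroup.inv_val] at *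
    show Matrix.det (star (a : M2)) = 1
    have : star (a : M2) = (a : M2)ᴴ := rfl
    rw [this, Matrix.det_conjTranspose, ha, star_one]

/-- The underlying matrix of an element of SU(2). -/
def mat (g : SU2) : M2 := ((g : Matrix.unitaryGroup (Fin 2) ℂ) : M2)

@[simp] lemma mat_one : mat (1 : SU2) = 1 := rfl
@[simp] lemma mat_mul (g h : SU2) : mat (g * h) = mat g * mat h := rfl
@[simp] lemma mat_inv (g : SU2) : mat g⁻¹ = star (mat g) := rfl

/-- The diagonal matrix `exp(α x₀) = diag(e^{2πiα}, e^{-2πiα})`. -/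
def expD (α : ℝ) : M2 :=
  Matrix.diagonal ![Complex.exp (2 * Real.pi * α * Complex.I),
                    Complex.exp (-(2 * Real.pi * α * Complex.I))]

lemma expD_mem (α : ℝ) : expD α ∈ Matrix.unitaryGroup (Fin 2) ℂ := by
  rw [Matrix.mem_unitaryGroup_iff]
  show expD α * (expD α)ᴴ = 1
  rw [expD, Matrix.diagonal_conjTranspose, Matrix.diagonal_mul_diagonal]
  have h : (fun i => ![Complex.exp (2 * Real.pi * α * Complex.I),
      Complex.exp (-(2 * Real.pi * α * Complex.I))] i *
      star ![Complex.exp (2 * Real.pi * α * Complex.I),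
      Complex.exp (-(2 * Real.pi * α * Complex.I))] i) = (1 : Fin 2 → ℂ) := by
    funext i
    fin_cases i <;>
      simp [Pi.star_apply, Complex.star_def, ← Complex.exp_conj,
        ← Complex.exp_add, Complex.conj_I, Complex.conj_ofReal] <;>
      simp [map_ofNat]
  rw [h]
  exact Matrix.diagonal_one

lemma expD_det (α : ℝ) : (expD α).det = 1 := by
  rw [expD, Matrix.det_diagonal]
  rw [show (Finset.univ : Finset (Fin 2)) = {0, 1} from rfl]
  rw [Finset.prod_insert (by simp), Finset.prod_singleton]
  simp [← Complex.exp_add]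

/-- `exp(α x₀)` as an element of SU(2). -/
def diagSU2 (α : ℝ) : SU2 := ⟨⟨expD α, expD_mem α⟩, expD_det α⟩

/-- The conjugacy class `C_α ⊂ SU(2)` of `exp(α x₀)`. -/
def Cα (α : ℝ) : Set SU2 := { g | ∃ u : SU2, u * diagSU2 α * u⁻¹ = g }

/-- The `G`-extended moduli space `N^G(Σ)` for `n = m+1` marked points: tuples
`(a_2,…,a_n, b_1,…,b_n)` with `b_1 (a_2 b_2 a_2⁻¹) ⋯ (a_n b_n a_n⁻¹) = 1`.
Here `a i` stands for `a_{i+2}` and `b i` for `b_{i+1}`. -/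
def NGset (m : ℕ) : Set ((Fin m → SU2) × (Fin (m+1) → SU2)) :=
  { p | p.2 0 * (List.ofFn (fun i : Fin m => p.1 i * p.2 i.succ * (p.1 i)⁻¹)).prod = 1 }

/-- The subset `N^G(Σ;α)` where each `b_i` lies in the conjugacy class `C_{α_i}`. -/
def NGsetW (m : ℕ) (α : Fin (m+1) → ℝ) : Set ((Fin m → SU2) × (Fin (m+1) → SU2)) :=
  { p | p ∈ NGset m ∧ ∀ i, p.2 i ∈ Cα (α i) }
/-- The real vector space `su(2)` of skew-hermitian traceless 2×2 complex matrices,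
as a predicate. -/
def Issu2 (ξ : M2) : Prop := ξᴴ = -ξ ∧ ξ.trace = 0

/-! ### Auxiliary lemmas -/

section Aux
open Matrix Complex

lemma mat_mul_inv' (g : SU2) : mat g * mat g⁻¹ = 1 := by
  rw [← mat_mul, mul_inv_cancel, mat_one]

lemma mat_inv_mul' (g : SU2) : mat g⁻¹ * mat g = 1 := by
  rw [← mat_mul, inv_mul_cancel, mat_one]

lemma mat_cancel_left (g : SU2) (X : M2) : mat g * (mat g⁻¹ * X) = X := by
  rw [← mul_assoc, mat_mul_inv', one_mul]

lemma mat_cancel_left' (g : SU2) (X : M2) : mat g⁻¹ * (mat g * X) = X := by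
  rw [← mul_assoc, mat_inv_mul', one_mul]

lemma matInv_conjTranspose (g : SU2) : mat g⁻¹ = (mat g)ᴴ := by
  rw [mat_inv, Matrix.star_eq_conjTranspose]

lemma isDiag_mul' {A B : M2} (hA : A.IsDiag) (hB : B.IsDiag) : (A * B).IsDiag := by
  intro i j hij
  rw [Matrix.mul_apply]
  apply Finset.sum_eq_zero
  intro k _
  rcases eq_or_ne i k with rfl | hik
  · rw [hB hij, mul_zero]
  · rw [hA hik, zero_mul]

lemma isDiag_comm {A B : M2} (hA : A.IsDiag) (hB : B.IsDiag) : A * B = B * A := by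
  rw [← hA.diagonal_diag, ← hB.diagonal_diag, Matrix.diagonal_mul_diagonal,
    Matrix.diagonal_mul_diagonal]
  exact congrArg Matrix.diagonal (mul_comm (Matrix.diag A) (Matrix.diag B))

lemma isDiag_of_comm_diagonal {A : M2} {d : Fin 2 → ℂ} (hd : d 0 ≠ d 1)
    (h : A * Matrix.diagonal d = Matrix.diagonal d * A) : A.IsDiag := by
  intro i j hij
  have h' := congrFun (congrFun h i) j
  rw [Matrix.mul_diagonal, Matrix.diagonal_mul] at h'
  have h2 : A i j * (d j - d i) = 0 := by linear_combination h'
  rcases mul_eq_zero.mp h2 with h3 | h3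
  · exact h3
  · exfalso
    fin_cases i <;> fin_cases j <;> simp_all
    · exact hd (sub_eq_zero.mp h3).symm
    · exact hd (sub_eq_zero.mp h3)

end Aux

section Aux2
open Matrix Complex

lemma Issu2.conj {ξ : M2} (g : SU2) (h : Issu2 ξ) : Issu2 (mat g * ξ * mat g⁻¹) := by
  obtain ⟨h1, h2⟩ := h
  constructor
  · rw [Matrix.conjTranspose_mul, Matrix.conjTranspose_mul, h1, matInv_conjTranspose,
      Matrix.conjTranspose_conjTranspose, ← matInv_conjTranspose]
    simp [Matrix.mul_neg, Matrix.neg_mul, mul_assoc]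
  · rw [Matrix.trace_mul_comm, ← mul_assoc, mat_inv_mul', one_mul, h2]

lemma trace_mul_conjTranspose_self_eq_zero {A : M2} (h : (A * Aᴴ).trace = 0) : A = 0 := by
  have e : (A * Aᴴ).trace = ((∑ i : Fin 2, ∑ j : Fin 2, Complex.normSq (A i j) : ℝ) : ℂ) := by
    simp [Matrix.trace, Matrix.diag, Matrix.mul_apply, Matrix.conjTranspose_apply,
      Complex.mul_conj]
  rw [e, Complex.ofReal_eq_zero] at h
  have hz : ∀ i ∈ (Finset.univ : Finset (Fin 2)), ∑ j : Fin 2, Complex.normSq (A i j) = 0 := by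
    rw [← Finset.sum_eq_zero_iff_of_nonneg]
    · exact h
    · intro i _
      exact Finset.sum_nonneg fun j _ => Complex.normSq_nonneg _
  have hz2 : ∀ i j : Fin 2, Complex.normSq (A i j) = 0 := by
    intro i j
    have := (Finset.sum_eq_zero_iff_of_nonneg
      (fun j _ => Complex.normSq_nonneg (A i j))).mp (hz i (Finset.mem_univ i))
    exact this j (Finset.mem_univ j)
  ext i j
  rw [Matrix.zero_apply]
  exact Complex.normSq_eq_zero.mp (hz2 i j)

lemma su2_trace_self {ρ : M2} (hρ : Issu2 ρ) (h : (ρ * ρ).trace = 0) : ρ = 0 := by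
  apply trace_mul_conjTranspose_self_eq_zero
  rw [hρ.1, Matrix.mul_neg, Matrix.trace_neg, h, neg_zero]

lemma su2_perp {ρ : M2} (hρ : Issu2 ρ) (h : ∀ ξ : M2, Issu2 ξ → (ρ * ξ).trace = 0) : ρ = 0 :=
  su2_trace_self hρ (h ρ hρ)

lemma trace_conj (η X : M2) (d : SU2) :
    (η * (mat d * X * mat d⁻¹)).trace = ((mat d⁻¹ * η * mat d) * X).trace :=
  calc (η * (mat d * X * mat d⁻¹)).trace
      = ((mat d * X * mat d⁻¹) * η).trace := Matrix.trace_mul_comm _ _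
    _ = ((mat d * X) * (mat d⁻¹ * η)).trace := by rw [mul_assoc]
    _ = ((mat d⁻¹ * η) * (mat d * X)).trace := Matrix.trace_mul_comm _ _
    _ = ((mat d⁻¹ * η * mat d) * X).trace := by simp only [mul_assoc]

lemma trace_conj_sub (η ξ : M2) (d c : SU2) :
    (η * (mat d * (ξ - mat c * ξ * mat c⁻¹) * mat d⁻¹)).trace
      = ((mat d⁻¹ * η * mat d - mat c⁻¹ * (mat d⁻¹ * η * mat d) * mat c) * ξ).trace := by
  rw [trace_conj, Matrix.mul_sub, Matrix.trace_sub, trace_conj, Matrix.sub_mul,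
    Matrix.trace_sub]

end Aux2

section Iota
open Matrix Complex

abbrev E3 : Type := EuclideanSpace ℝ (Fin 3)

def iotaL : E3 →ₗ[ℝ] M2 where
  toFun v := !![(v 0 : ℂ) * Complex.I, (v 1 : ℂ) + (v 2 : ℂ) * Complex.I;
     -(v 1 : ℂ) + (v 2 : ℂ) * Complex.I, -((v 0 : ℂ) * Complex.I)]
  map_add' x y := by
    ext i j
    fin_cases i <;> fin_cases j <;>
      simp [Matrix.add_apply, PiLp.add_apply] <;> push_cast <;> ring
  map_smul' r x := by
    ext i j
    fin_cases i <;> fin_cases j <;>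
      simp [Matrix.smul_apply, PiLp.smul_apply, Complex.real_smul] <;> push_cast <;> ring

def piL : M2 →ₗ[ℝ] E3 where
  toFun ξ := (WithLp.equiv 2 (Fin 3 → ℝ)).symm ![(ξ 0 0).im, (ξ 0 1).re, (ξ 0 1).im]
  map_add' x y := by
    ext i
    fin_cases i <;> simp [Matrix.add_apply]
  map_smul' r x := by
    ext i
    fin_cases i <;> simp [Matrix.smul_apply, Complex.real_smul]

lemma iotaL_issu2 (v : E3) : Issu2 (iotaL v) := by
  constructor
  · ext i j
    fin_cases i <;> fin_cases j <;>
      simp [iotaL, Matrix.conjTranspose_apply, Complex.ext_iff]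
  · simp [iotaL, Matrix.trace_fin_two]

lemma pi_iota (v : E3) : piL (iotaL v) = v := by
  ext i
  fin_cases i <;> simp [iotaL, piL]

lemma iota_pi {ξ : M2} (h : Issu2 ξ) : iotaL (piL ξ) = ξ := by
  obtain ⟨h1, h2⟩ := h
  have h00 := congrFun (congrFun h1 0) 0
  have h10 := congrFun (congrFun h1 1) 0
  rw [Matrix.conjTranspose_apply, Matrix.neg_apply] at h00 h10
  have htr : ξ 1 1 = - ξ 0 0 := by
    rw [Matrix.trace_fin_two] at h2
    linear_combination h2
  have hre : (ξ 0 0).re = 0 := by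
    have := congrArg Complex.re h00
    simp at this
    linarith
  ext i j
  fin_cases i <;> fin_cases j
  · show (((ξ 0 0).im : ℂ)) * Complex.I = ξ 0 0
    rw [← Complex.re_add_im (ξ 0 0), hre]
    simp
  · show (((ξ 0 1).re : ℂ)) + ((ξ 0 1).im : ℂ) * Complex.I = ξ 0 1
    exact Complex.re_add_im _
  · show -(((ξ 0 1).re : ℂ)) + ((ξ 0 1).im : ℂ) * Complex.I = ξ 1 0
    have h10' : ξ 1 0 = -star (ξ 0 1) := by linear_combination h10
    rw [h10', Complex.star_def]
    simp [Complex.ext_iff]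
  · show -((((ξ 0 0).im : ℂ)) * Complex.I) = ξ 1 1
    rw [htr, ← Complex.re_add_im (ξ 0 0), hre]
    simp

lemma iotaL_inj {v : E3} (h : iotaL v = 0) : v = 0 := by
  have := congrArg piL h
  rw [pi_iota, map_zero] at this
  exact this

lemma trace_iota_pair (v w : E3) :
    ((iotaL v) * (iotaL w)).trace = ((-2 * (inner ℝ v w : ℝ) : ℝ) : ℂ) := by
  simp [iotaL, Matrix.trace_fin_two, Matrix.mul_apply, Fin.sum_univ_two, Fin.sum_univ_three,
    PiLp.inner_apply, RCLike.inner_apply, Complex.ext_iff]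
  constructor <;> ring

end Iota

section Spectral
open Matrix Complex

lemma diagonal_congr {f g : Fin 2 → ℂ} (h : ∀ i, f i = g i) :
    Matrix.diagonal f = Matrix.diagonal g := congrArg _ (funext h)

lemma diagonal_mem_unitary (d' : Fin 2 → ℂ) (hd : ∀ i, star (d' i) * d' i = 1) :
    Matrix.diagonal d' ∈ Matrix.unitaryGroup (Fin 2) ℂ := by
  rw [Matrix.mem_unitaryGroup_iff']
  show (Matrix.diagonal d')ᴴ * _ = 1
  rw [Matrix.diagonal_conjTranspose, Matrix.diagonal_mul_diagonal, ← Matrix.diagonal_one]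
  exact diagonal_congr hd

lemma exists_su2_diag {η : M2} (h : Issu2 η) (hne : η ≠ 0) :
    ∃ (u : SU2) (dd : Fin 2 → ℂ), dd 0 ≠ dd 1 ∧ mat u * η * mat u⁻¹ = Matrix.diagonal dd := by
  obtain ⟨h1, h2⟩ := h
  have hherm : (Complex.I • η).IsHermitian := by
    show (Complex.I • η)ᴴ = Complex.I • η
    rw [Matrix.conjTranspose_smul, h1]
    simp
  set H : M2 := Complex.I • η with hH
  set lam := hherm.eigenvalues with hlam
  set U : M2 := (hherm.eigenvectorUnitary : M2) with hU
  set D : M2 := Matrix.diagonal (RCLike.ofReal ∘ lam) with hD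
  have hspec : H = U * D * star U := hherm.spectral_theorem
  have hUmem : U ∈ Matrix.unitaryGroup (Fin 2) ℂ := hherm.eigenvectorUnitary.2
  have hUU : star U * U = 1 := Matrix.mem_unitaryGroup_iff'.mp hUmem
  have htr : H.trace = 0 := by
    rw [hH, Matrix.trace_smul, h2, smul_zero]
  have htr2 : (lam 0 : ℂ) + (lam 1 : ℂ) = 0 := by
    have e1 : H.trace = (lam 0 : ℂ) + (lam 1 : ℂ) := by
      rw [hspec, Matrix.trace_mul_cycle, hUU, one_mul, hD,
        Matrix.trace_diagonal]
      simp [Fin.sum_univ_two]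
    rw [htr] at e1
    exact e1.symm
  have hlam1 : lam 1 = - lam 0 := by
    rw [← Complex.ofReal_add, Complex.ofReal_eq_zero] at htr2
    linarith
  have hlam0 : lam 0 ≠ 0 := by
    intro h0
    apply hne
    have hD0 : D = (0 : M2) := by
      rw [hD, ← Matrix.diagonal_zero]
      apply diagonal_congr
      intro i
      fin_cases i <;> simp [h0, hlam1]
    have hH0 : H = 0 := by rw [hspec, hD0, Matrix.mul_zero, Matrix.zero_mul]
    have h3 : (-Complex.I) • H = η := by
      rw [hH, smul_smul]
      simp
    rw [← h3, hH0, smul_zero]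
  -- normalize determinant
  set delta : ℂ := U.det with hdelta
  have hdu : delta ∈ unitary ℂ := Matrix.det_of_mem_unitary hUmem
  have hdd : star delta * delta = 1 := (Unitary.mem_iff.mp hdu).1
  have hdd' : delta * star delta = 1 := (Unitary.mem_iff.mp hdu).2
  set K : M2 := Matrix.diagonal ![star delta, 1] with hK
  have hKmem : K ∈ Matrix.unitaryGroup (Fin 2) ℂ := by
    apply diagonal_mem_unitary
    intro i
    fin_cases i
    · show star (star delta) * star delta = 1
      rw [star_star, hdd']
    · show star 1 * 1 = 1
      simp
  set V : M2 := U * K with hV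
  have hVmem : V ∈ Matrix.unitaryGroup (Fin 2) ℂ := mul_mem hUmem hKmem
  have hVdet : V.det = 1 := by
    rw [hV, Matrix.det_mul, hK, Matrix.det_diagonal, Fin.prod_univ_two]
    show delta * (star delta * 1) = 1
    rw [mul_one, hdd']
  have hWmem : star V ∈ Matrix.unitaryGroup (Fin 2) ℂ := Unitary.star_mem hVmem
  have hWdet : Matrix.det (star V) = 1 := by
    rw [Matrix.star_eq_conjTranspose, Matrix.det_conjTranspose, hVdet, star_one]
  set u : SU2 := ⟨⟨star V, hWmem⟩, hWdet⟩ with hu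
  have hmatu : mat u = star V := rfl
  have hmatu' : mat u⁻¹ = V := by
    rw [mat_inv, hmatu, star_star]
  refine ⟨u, fun i => -Complex.I * (lam i : ℂ), ?_, ?_⟩
  · intro hcon
    have e2 := mul_left_cancel₀ (neg_ne_zero.mpr Complex.I_ne_zero) hcon
    rw [Complex.ofReal_inj] at e2
    rw [hlam1] at e2
    apply hlam0
    linarith
  · rw [hmatu, hmatu']
    have hKdiag : star K * D * K = D := by
      rw [hK, hD, Matrix.star_eq_conjTranspose, Matrix.diagonal_conjTranspose,
        Matrix.diagonal_mul_diagonal, Matrix.diagonal_mul_diagonal]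
      apply diagonal_congr
      intro i
      show star (![star delta, 1] i) * (RCLike.ofReal (lam i)) * ![star delta, 1] i
          = RCLike.ofReal (lam i)
      fin_cases i
      · show star (star delta) * _ * star delta = _
        rw [star_star, mul_comm delta, mul_assoc, hdd', mul_one]
      · show star 1 * _ * 1 = _
        simp
    have heta : η = (-Complex.I) • H := by
      rw [hH, smul_smul]
      simp
    rw [heta, hspec]
    rw [Matrix.mul_smul, Matrix.smul_mul]
    have hstarV : star V = star K * star U := by rw [hV]; exact Matrix.star_mul U K
    rw [hstarV, hV]
    have e3 : (star K * star U) * (U * D * star U) * (U * K) = D := by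
      calc (star K * star U) * (U * D * star U) * (U * K)
          = star K * ((star U * U) * D * (star U * U)) * K := by
            simp only [mul_assoc]
        _ = star K * D * K := by rw [hUU, one_mul, mul_one]
        _ = D := hKdiag
    rw [e3, hD, ← Matrix.diagonal_smul]
    apply diagonal_congr
    intro i
    show -Complex.I * RCLike.ofReal (lam i) = -Complex.I * (lam i : ℂ)
    norm_num
end Spectral
section Phi
open Matrix Complex

lemma Issu2_zero : Issu2 (0 : M2) := by
  constructor <;> simp

lemma Issu2.sub {ξ η : M2} (h1 : Issu2 ξ) (h2 : Issu2 η) : Issu2 (ξ - η) := by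
  constructor
  · rw [Matrix.conjTranspose_sub, h1.1, h2.1, neg_sub_neg, neg_sub]
  · rw [Matrix.trace_sub, h1.2, h2.2, sub_zero]

/-- conjugation by `g` as a real-linear map on `M2`. -/
def conjL (g : SU2) : M2 →ₗ[ℝ] M2 :=
  (LinearMap.mulRight ℝ (mat g⁻¹)).comp (LinearMap.mulLeft ℝ (mat g))

@[simp] lemma conjL_apply (g : SU2) (X : M2) : conjL g X = mat g * X * mat g⁻¹ := rfl

/-- the linear map `L` transported to `(ℝ³)^m → ℝ³`. -/
def PhiL (m : ℕ) (c : Fin m → SU2) : (Fin m → E3) →ₗ[ℝ] E3 :=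
  piL.comp (∑ i : Fin m,
    (conjL (((List.ofFn c).take i.1).prod)).comp
      (((LinearMap.id - conjL (c i)).comp
        (iotaL.comp (LinearMap.proj i))) : (Fin m → E3) →ₗ[ℝ] M2))

lemma PhiL_apply (m : ℕ) (c : Fin m → SU2) (w : Fin m → E3) :
    PhiL m c w = piL (∑ i : Fin m,
      mat (((List.ofFn c).take i.1).prod) *
        (iotaL (w i) - mat (c i) * iotaL (w i) * mat ((c i)⁻¹)) *
        mat ((((List.ofFn c).take i.1).prod)⁻¹)) := by
  simp [PhiL, LinearMap.sum_apply, conjL, LinearMap.sub_apply]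

lemma Issu2_sum {m : ℕ} (c : Fin m → SU2) (ξ : Fin m → M2) (hξ : ∀ i, Issu2 (ξ i)) :
    Issu2 (∑ i : Fin m,
      mat (((List.ofFn c).take i.1).prod) *
        (ξ i - mat (c i) * ξ i * mat ((c i)⁻¹)) *
        mat ((((List.ofFn c).take i.1).prod)⁻¹)) := by
  have hterm : ∀ i : Fin m, Issu2 (mat (((List.ofFn c).take i.1).prod) *
      (ξ i - mat (c i) * ξ i * mat ((c i)⁻¹)) *
      mat ((((List.ofFn c).take i.1).prod)⁻¹)) := by
    intro i
    apply Issu2.conj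
    refine (hξ i).sub ?_
    exact (hξ i).conj (c i)
  constructor
  · rw [Matrix.conjTranspose_sum, ← Finset.sum_neg_distrib]
    exact Finset.sum_congr rfl fun i _ => (hterm i).1
  · rw [Matrix.trace_sum]
    exact Finset.sum_eq_zero fun i _ => (hterm i).2

lemma surj_iff (m : ℕ) (c : Fin m → SU2) :
    (∀ η : M2, Issu2 η →
        ∃ ξ : Fin m → M2, (∀ i, Issu2 (ξ i)) ∧
          ∑ i : Fin m,
            mat (((List.ofFn c).take i.1).prod) *
              (ξ i - mat (c i) * ξ i * mat ((c i)⁻¹)) *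
              mat ((((List.ofFn c).take i.1).prod)⁻¹) = η) ↔
      Function.Surjective (PhiL m c) := by
  constructor
  · intro h v
    obtain ⟨ξ, hξ, hsum⟩ := h (iotaL v) (iotaL_issu2 v)
    refine ⟨fun i => piL (ξ i), ?_⟩
    rw [PhiL_apply]
    have : ∀ i : Fin m, iotaL (piL (ξ i)) = ξ i := fun i => iota_pi (hξ i)
    simp only [this, hsum, pi_iota]
  · intro h η hη
    obtain ⟨w, hw⟩ := h (piL η)
    refine ⟨fun i => iotaL (w i), fun i => iotaL_issu2 _, ?_⟩
    rw [PhiL_apply] at hw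
    have hS := Issu2_sum c (fun i => iotaL (w i)) (fun i => iotaL_issu2 _)
    calc (∑ i : Fin m, mat (((List.ofFn c).take i.1).prod) *
          (iotaL (w i) - mat (c i) * iotaL (w i) * mat ((c i)⁻¹)) *
          mat ((((List.ofFn c).take i.1).prod)⁻¹))
        = iotaL (piL (∑ i : Fin m, mat (((List.ofFn c).take i.1).prod) *
          (iotaL (w i) - mat (c i) * iotaL (w i) * mat ((c i)⁻¹)) *
          mat ((((List.ofFn c).take i.1).prod)⁻¹))) := (iota_pi hS).symm
      _ = iotaL (piL η) := by rw [hw]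
      _ = η := iota_pi hη

end Phi
section Rho
open Matrix Complex

lemma rho_zero_of_comm (d c : SU2) (η : M2)
    (hcomm : mat (d * c * d⁻¹) * η = η * mat (d * c * d⁻¹)) :
    mat d⁻¹ * η * mat d - mat c⁻¹ * (mat d⁻¹ * η * mat d) * mat c = 0 := by
  rw [sub_eq_zero]
  have h2 := congrArg (fun Z => mat d⁻¹ * Z * mat d) hcomm.symm
  simp only [mat_mul, mul_assoc, mat_cancel_left, mat_cancel_left', mat_mul_inv',
    mat_inv_mul', mul_one, one_mul] at h2
  simp only [mul_assoc]
  rw [h2, mat_cancel_left']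

lemma comm_of_rho_zero (d c : SU2) (η : M2)
    (h : mat d⁻¹ * η * mat d - mat c⁻¹ * (mat d⁻¹ * η * mat d) * mat c = 0) :
    mat (d * c * d⁻¹) * η = η * mat (d * c * d⁻¹) := by
  rw [sub_eq_zero] at h
  set X := mat d⁻¹ * η * mat d with hX
  have h1 : mat c * X = X * mat c := by
    nth_rewrite 1 [h]
    simp only [mul_assoc, mat_cancel_left]
  have hη : η = mat d * X * mat d⁻¹ := by
    rw [hX]
    simp only [mul_assoc, mat_cancel_left, mat_mul_inv', mul_one]
  have h3 : mat d⁻¹ * η = X * mat d⁻¹ := by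
    rw [hX]
    simp only [mul_assoc, mat_mul_inv', mul_one]
  calc mat (d * c * d⁻¹) * η
      = mat d * (mat c * (mat d⁻¹ * η)) := by simp only [mat_mul, mul_assoc]
    _ = mat d * (mat c * (X * mat d⁻¹)) := by rw [h3]
    _ = mat d * ((mat c * X) * mat d⁻¹) := by rw [← mul_assoc (mat c) X]
    _ = mat d * ((X * mat c) * mat d⁻¹) := by rw [h1]
    _ = (mat d * X * mat d⁻¹) * (mat d * (mat c * mat d⁻¹)) := by
        simp only [mul_assoc, mat_cancel_left, mat_cancel_left']
    _ = η * mat (d * c * d⁻¹) := by rw [← hη]; simp only [mat_mul, mul_assoc]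

lemma conj_comm_of_comm (u : SU2) {A B : M2} (h : A * B = B * A) :
    (mat u⁻¹ * A * mat u) * (mat u⁻¹ * B * mat u)
      = (mat u⁻¹ * B * mat u) * (mat u⁻¹ * A * mat u) := by
  simp only [mul_assoc, mat_cancel_left]
  rw [← mul_assoc A, h, mul_assoc]

end Rho
section Lists
open Matrix

lemma mat_prod_take_conj {m : ℕ} (c : Fin m → SU2) (u : SU2) (k : ℕ)
    (hdiag : ∀ j : Fin m, j.1 < k → (mat (u * c j * u⁻¹)).IsDiag) :
    (mat (u * ((List.ofFn c).take k).prod * u⁻¹)).IsDiag := by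
  induction k with
  | zero =>
    simp only [List.take_zero, List.prod_nil, mul_one]
    rw [show u * u⁻¹ = 1 from mul_inv_cancel u, mat_one]
    exact Matrix.isDiag_one
  | succ k ih =>
    by_cases hk : k < m
    · have hlen : k < (List.ofFn c).length := by simpa using hk
      rw [List.take_succ, List.getElem?_eq_getElem hlen, List.getElem_ofFn]
      rw [Option.toList_some, List.prod_append, List.prod_singleton]
      have hsplit : u * (((List.ofFn c).take k).prod * c ⟨k, by simpa using hlen⟩) * u⁻¹
          = (u * ((List.ofFn c).take k).prod * u⁻¹) * (u * c ⟨k, by simpa using hlen⟩ * u⁻¹) := by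
        group
      rw [hsplit, mat_mul]
      exact isDiag_mul' (ih fun j hj => hdiag j (Nat.lt_succ_of_lt hj))
        (hdiag _ (Nat.lt_succ_self k))
    · have hlen : (List.ofFn c).length ≤ k := by simpa using Nat.le_of_not_lt hk
      rw [List.take_succ, List.getElem?_eq_none hlen, Option.toList_none, List.append_nil]
      exact ih fun j hj => hdiag j (Nat.lt_succ_of_lt hj)

lemma all_c_diag {m : ℕ} (c : Fin m → SU2) (u : SU2)
    (hg : ∀ i : Fin m, (mat (u * (((List.ofFn c).take i.1).prod * c i *
        (((List.ofFn c).take i.1).prod)⁻¹) * u⁻¹)).IsDiag) :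
    ∀ i : Fin m, (mat (u * c i * u⁻¹)).IsDiag := by
  have main : ∀ k : ℕ, ∀ i : Fin m, i.1 = k → (mat (u * c i * u⁻¹)).IsDiag := by
    intro k
    induction k using Nat.strong_induction_on with
    | _ k IH =>
      intro i hik
      set d := ((List.ofFn c).take i.1).prod with hd
      have hddiag : (mat (u * d * u⁻¹)).IsDiag :=
        mat_prod_take_conj c u i.1 (fun j hj => IH j.1 (hik ▸ hj) j rfl)
      have hsplit : u * c i * u⁻¹
          = (u * d * u⁻¹)⁻¹ * (u * (d * c i * d⁻¹) * u⁻¹) * (u * d * u⁻¹) := by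
        group
      rw [hsplit, mat_mul, mat_mul]
      refine isDiag_mul' (isDiag_mul' ?_ (hg i)) hddiag
      rw [mat_inv, Matrix.star_eq_conjTranspose]
      exact hddiag.conjTranspose
  exact fun i => main i.1 i rfl
end Lists


/-- the linear map `L(ξ) = Σ_i (c_2⋯c_{i-1})(ξ_i − c_i ξ_i c_i⁻¹)(c_2⋯c_{i-1})⁻¹`
is surjective onto `su(2)` if and only if `b_1, c_2, …, c_n` do not lie on a common
maximal torus.  Here `n = m+1` and `c_i = a_i b_i a_i⁻¹`. -/
theorem stmt_7 (m : ℕ) (hm : 1 ≤ m) (α : Fin (m+1) → ℝ)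
    (hα : ∀ i, α i ∈ Set.Ioo (0:ℝ) (1/2))
    (a : Fin m → SU2) (b : Fin (m+1) → SU2) (hab : (a, b) ∈ NGsetW m α)
    (c : Fin m → SU2) (hc : ∀ i, c i = a i * b i.succ * (a i)⁻¹) :
    (∀ η : M2, Issu2 η →
        ∃ ξ : Fin m → M2, (∀ i, Issu2 (ξ i)) ∧
          ∑ i : Fin m,
            mat (((List.ofFn c).take i.1).prod) *
              (ξ i - mat (c i) * ξ i * mat ((c i)⁻¹)) *
              mat ((((List.ofFn c).take i.1).prod)⁻¹) = η) ↔
      ¬ ∃ u : SU2, (mat (u * b 0 * u⁻¹)).IsDiag ∧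
          ∀ i : Fin m, (mat (u * c i * u⁻¹)).IsDiag := by
  obtain ⟨hrel', _hw⟩ := hab
  have hrel : b 0 * (List.ofFn c).prod = 1 := by
    have hfn : (fun i : Fin m => a i * b i.succ * (a i)⁻¹) = c := by
      funext i; exact (hc i).symm
    have := hrel'
    rw [NGset, Set.mem_setOf_eq] at this
    simpa [hfn] using this
  constructor
  · -- surjective → no common diagonalizer
    rintro hsurj ⟨u, _hb0, hcdiag⟩
    have hgdiag : ∀ i : Fin m,
        (mat (u * (((List.ofFn c).take i.1).prod * c i *
          (((List.ofFn c).take i.1).prod)⁻¹) * u⁻¹)).IsDiag := by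
      intro i
      have hd := mat_prod_take_conj c u i.1 (fun j _ => hcdiag j)
      have hsplit : u * (((List.ofFn c).take i.1).prod * c i *
            (((List.ofFn c).take i.1).prod)⁻¹) * u⁻¹
          = (u * ((List.ofFn c).take i.1).prod * u⁻¹) * (u * c i * u⁻¹) *
            (u * ((List.ofFn c).take i.1).prod * u⁻¹)⁻¹ := by group
      rw [hsplit, mat_mul, mat_mul, mat_inv, Matrix.star_eq_conjTranspose]
      exact isDiag_mul' (isDiag_mul' hd (hcdiag i)) hd.conjTranspose
    set E : M2 := Matrix.diagonal ![Complex.I, -Complex.I] with hE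
    have hEdiag : E.IsDiag := by rw [hE]; exact Matrix.isDiag_diagonal _
    have hEsu : Issu2 E := by
      constructor
      · ext i j
        fin_cases i <;> fin_cases j <;>
          simp [hE, Matrix.conjTranspose_apply, Matrix.diagonal]
      · rw [hE, Matrix.trace_diagonal]
        simp [Fin.sum_univ_two]
    have hηsu : Issu2 (mat u⁻¹ * E * mat u⁻¹⁻¹) := hEsu.conj u⁻¹
    rw [inv_inv] at hηsu
    set η : M2 := mat u⁻¹ * E * mat u with hηdef
    have hηne : η ≠ 0 := by
      intro h0
      have hE0 : E = mat u * η * mat u⁻¹ := by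
        rw [hηdef]
        simp only [mul_assoc, mat_cancel_left, mat_mul_inv', mul_one]
      rw [h0, Matrix.mul_zero, Matrix.zero_mul] at hE0
      have := congrFun (congrFun hE0 0) 0
      rw [hE] at this
      simp at this
    have hcomm : ∀ i : Fin m,
        mat (((List.ofFn c).take i.1).prod * c i * (((List.ofFn c).take i.1).prod)⁻¹) * η
          = η * mat (((List.ofFn c).take i.1).prod * c i *
              (((List.ofFn c).take i.1).prod)⁻¹) := by
      intro i
      have hgrp : u⁻¹ * (u * (((List.ofFn c).take i.1).prod * c i *
          (((List.ofFn c).take i.1).prod)⁻¹) * u⁻¹) * u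
          = ((List.ofFn c).take i.1).prod * c i * (((List.ofFn c).take i.1).prod)⁻¹ := by
        group
      have hgmat := congrArg mat hgrp
      rw [mat_mul, mat_mul] at hgmat
      rw [← hgmat, hηdef]
      exact conj_comm_of_comm u (isDiag_comm (hgdiag i) hEdiag)
    obtain ⟨ξ, hξ, hsum⟩ := hsurj η hηsu
    have htr0 : (η * η).trace = 0 := by
      nth_rewrite 2 [← hsum]
      rw [Finset.mul_sum, Matrix.trace_sum]
      apply Finset.sum_eq_zero
      intro i _
      rw [trace_conj_sub η (ξ i) _ (c i),
        rho_zero_of_comm _ (c i) η (hcomm i), Matrix.zero_mul, Matrix.trace_zero]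
    exact hηne (su2_trace_self hηsu htr0)
  · -- no common diagonalizer → surjective
    intro hnodiag
    rw [surj_iff]
    by_contra hns
    have hrange : LinearMap.range (PhiL m c) ≠ ⊤ := by
      rwa [Ne, LinearMap.range_eq_top]
    have horth : (LinearMap.range (PhiL m c))ᗮ ≠ ⊥ := by
      intro h0
      exact hrange (Submodule.orthogonal_eq_bot_iff.mp h0)
    obtain ⟨v, hv, hvne⟩ := Submodule.ne_bot_iff _ |>.mp horth
    rw [Submodule.mem_orthogonal] at hv
    set η : M2 := iotaL v with hηdef
    have hηsu : Issu2 η := iotaL_issu2 v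
    have hηne : η ≠ 0 := fun h0 => hvne (iotaL_inj h0)
    have hrho : ∀ i : Fin m, ∀ ξ : M2, Issu2 ξ →
        (η * (mat (((List.ofFn c).take i.1).prod) *
          (ξ - mat (c i) * ξ * mat ((c i)⁻¹)) *
          mat ((((List.ofFn c).take i.1).prod)⁻¹))).trace = 0 := by
      intro i ξ hξ
      have hterm_su : Issu2 (mat (((List.ofFn c).take i.1).prod) *
          (ξ - mat (c i) * ξ * mat ((c i)⁻¹)) *
          mat ((((List.ofFn c).take i.1).prod)⁻¹)) :=
        Issu2.conj _ (hξ.sub (hξ.conj (c i)))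
      have hPhiS : PhiL m c (Pi.single i (piL ξ))
          = piL (mat (((List.ofFn c).take i.1).prod) *
              (ξ - mat (c i) * ξ * mat ((c i)⁻¹)) *
              mat ((((List.ofFn c).take i.1).prod)⁻¹)) := by
        rw [PhiL_apply]
        apply congrArg piL
        rw [Finset.sum_eq_single i]
        · rw [Pi.single_eq_same, iota_pi hξ]
        · intro j _ hji
          rw [Pi.single_eq_of_ne hji, map_zero]
          simp
        · intro h
          exact absurd (Finset.mem_univ i) h
      have e1 : (η * (mat (((List.ofFn c).take i.1).prod) *
            (ξ - mat (c i) * ξ * mat ((c i)⁻¹)) *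
            mat ((((List.ofFn c).take i.1).prod)⁻¹))).trace
          = ((-2 * (inner ℝ v (piL (mat (((List.ofFn c).take i.1).prod) *
              (ξ - mat (c i) * ξ * mat ((c i)⁻¹)) *
              mat ((((List.ofFn c).take i.1).prod)⁻¹))) : ℝ) : ℝ) : ℂ) := by
        conv_lhs => rw [hηdef, ← iota_pi hterm_su]
        exact trace_iota_pair v _
      rw [e1]
      have e2 : (inner ℝ v (piL (mat (((List.ofFn c).take i.1).prod) *
          (ξ - mat (c i) * ξ * mat ((c i)⁻¹)) *
          mat ((((List.ofFn c).take i.1).prod)⁻¹))) : ℝ) = 0 := by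
        rw [← hPhiS, real_inner_comm]
        exact hv _ (LinearMap.mem_range_self _ _)
      rw [e2]
      simp
    have hρ0 : ∀ i : Fin m,
        mat (((List.ofFn c).take i.1).prod)⁻¹ * η * mat (((List.ofFn c).take i.1).prod)
          - mat (c i)⁻¹ * (mat (((List.ofFn c).take i.1).prod)⁻¹ * η *
              mat (((List.ofFn c).take i.1).prod)) * mat (c i) = 0 := by
      intro i
      have hX : Issu2 (mat (((List.ofFn c).take i.1).prod)⁻¹ * η *
          mat (((List.ofFn c).take i.1).prod)) := by
        have := hηsu.conj (((List.ofFn c).take i.1).prod)⁻¹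
        rwa [inv_inv] at this
      have hY : Issu2 (mat (c i)⁻¹ * (mat (((List.ofFn c).take i.1).prod)⁻¹ * η *
          mat (((List.ofFn c).take i.1).prod)) * mat (c i)) := by
        have := hX.conj (c i)⁻¹
        rwa [inv_inv] at this
      apply su2_perp (hX.sub hY)
      intro ξ hξ
      rw [← trace_conj_sub]
      exact hrho i ξ hξ
    have hcommη : ∀ i : Fin m,
        mat (((List.ofFn c).take i.1).prod * c i * (((List.ofFn c).take i.1).prod)⁻¹) * η
          = η * mat (((List.ofFn c).take i.1).prod * c i *
              (((List.ofFn c).take i.1).prod)⁻¹) :=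
      fun i => comm_of_rho_zero _ (c i) η (hρ0 i)
    obtain ⟨u, dd, hdd, hudiag⟩ := exists_su2_diag hηsu hηne
    have hgdiag : ∀ i : Fin m,
        (mat (u * (((List.ofFn c).take i.1).prod * c i *
          (((List.ofFn c).take i.1).prod)⁻¹) * u⁻¹)).IsDiag := by
      intro i
      apply isDiag_of_comm_diagonal hdd
      have hM : mat (u * (((List.ofFn c).take i.1).prod * c i *
          (((List.ofFn c).take i.1).prod)⁻¹) * u⁻¹)
          = mat u * mat (((List.ofFn c).take i.1).prod * c i *
              (((List.ofFn c).take i.1).prod)⁻¹) * mat u⁻¹ := by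
        rw [mat_mul, mat_mul]
      have := conj_comm_of_comm u⁻¹ (hcommη i)
      rw [inv_inv] at this
      rw [hM, ← hudiag]
      exact this
    have hcall : ∀ i : Fin m, (mat (u * c i * u⁻¹)).IsDiag := all_c_diag c u hgdiag
    have htake : (List.ofFn c).take m = List.ofFn c :=
      List.take_of_length_le (by simp)
    have hproddiag : (mat (u * (List.ofFn c).prod * u⁻¹)).IsDiag := by
      have := mat_prod_take_conj c u m (fun j _ => hcall j)
      rwa [htake] at this
    have hb0 : b 0 = ((List.ofFn c).prod)⁻¹ := eq_inv_of_mul_eq_one_left hrel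
    have hbconj : u * b 0 * u⁻¹ = (u * (List.ofFn c).prod * u⁻¹)⁻¹ := by
      rw [hb0]; group
    refine hnodiag ⟨u, ?_, hcall⟩
    rw [hbconj, mat_inv, Matrix.star_eq_conjTranspose]
    exact hproddiag.conjTranspose
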